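/- There is a unique α ∈ (0,1) satisfying ((1−α)/α²)^{α−1} = α, and it satisfies 0.35 < α < 0.37 (numerically α ≈ 0.360). -/

import Mathlib

/-- Auxiliary function: the equation `((1-α)/α²)^(α-1) = α` is equivalent
to `hAux α = 0` for `α ∈ (0,1)`. -/
noncomputable def hAux (x : ℝ) : ℝ :=
  (x - 1) * Real.log (1 - x) - (2 * x - 1) * Real.log x

lemma hAux_hasDerivAt {x : ℝ} (hx0 : 0 < x) (hx1 : x < 1) :
    HasDerivAt hAux (Real.log (1 - x) - 2 * Real.log x + 1 / x - 1) x := by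
  have hne : (1:ℝ) - x ≠ 0 := by linarith
  have h1 : HasDerivAt (fun y : ℝ => 1 - y) (-1) x := by
    simpa using (hasDerivAt_id x).const_sub 1
  have h2 : HasDerivAt (fun y : ℝ => Real.log (1 - y)) ((1 - x)⁻¹ * (-1)) x :=
    (Real.hasDerivAt_log hne).comp x h1
  have h3 : HasDerivAt (fun y : ℝ => (y - 1) * Real.log (1 - y))
      (1 * Real.log (1 - x) + (x - 1) * ((1 - x)⁻¹ * (-1))) x :=
    ((hasDerivAt_id x).sub_const 1).mul h2
  have h4 : HasDerivAt (fun y : ℝ => (2 * y - 1) * Real.log y)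
      (2 * Real.log x + (2 * x - 1) * x⁻¹) x := by
    have := ((((hasDerivAt_id x).const_mul 2).sub_const 1)).mul (Real.hasDerivAt_log hx0.ne')
    refine this.congr_deriv ?_
    simp
  have h5 := h3.sub h4
  refine h5.congr_deriv ?_
  field_simp
  ring

lemma hAux_strictMonoOn : StrictMonoOn hAux (Set.Ioo (0:ℝ) (1/2)) := by
  apply strictMonoOn_of_deriv_pos (convex_Ioo _ _)
  · intro x hx
    exact (hAux_hasDerivAt hx.1 (by linarith [hx.2])).continuousAt.continuousWithinAt
  · rw [interior_Ioo]
    intro x hx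
    obtain ⟨hx0, hx2⟩ := hx
    rw [(hAux_hasDerivAt hx0 (by linarith)).deriv]
    have hlog : Real.log (x ^ 2) < Real.log (1 - x) :=
      Real.log_lt_log (by positivity) (by nlinarith)
    rw [Real.log_pow] at hlog
    push_cast at hlog
    have hinv : (1:ℝ) < 1 / x := by
      rw [lt_div_iff₀ hx0]; linarith
    linarith

lemma hAux_pos_of_half {x : ℝ} (hx0 : 1/2 ≤ x) (hx1 : x < 1) : 0 < hAux x := by
  have hl1 : Real.log (1 - x) < 0 := Real.log_neg (by linarith) (by linarith)
  have hl2 : Real.log x < 0 := Real.log_neg (by linarith) hx1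
  have t1 : 0 < (x - 1) * Real.log (1 - x) := mul_pos_of_neg_of_neg (by linarith) hl1
  have t2 : (2 * x - 1) * Real.log x ≤ 0 :=
    mul_nonpos_of_nonneg_of_nonpos (by linarith) hl2.le
  unfold hAux
  linarith

lemma eq_iff_hAux {x : ℝ} (hx0 : 0 < x) (hx1 : x < 1) :
    ((1 - x) / x ^ 2) ^ (x - 1) = x ↔ hAux x = 0 := by
  have hb : (0:ℝ) < (1 - x) / x ^ 2 := div_pos (by linarith) (by positivity)
  have hlb : Real.log ((1 - x) / x ^ 2) = Real.log (1 - x) - 2 * Real.log x := by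
    rw [Real.log_div (by linarith) (by positivity), Real.log_pow]
    push_cast; ring
  rw [Real.rpow_def_of_pos hb]
  constructor
  · intro hE
    have h2 := congrArg Real.log hE
    rw [Real.log_exp, hlb] at h2
    unfold hAux
    linear_combination h2
  · intro h0
    have h2 : Real.log ((1 - x) / x ^ 2) * (x - 1) = Real.log x := by
      rw [hlb]
      unfold hAux at h0
      linear_combination h0
    rw [h2, Real.exp_log hx0]

lemma hAux_neg_35 : hAux 0.35 < 0 := by
  have key : Real.log ((0.35:ℝ) ^ 6) < Real.log ((0.65:ℝ) ^ 13) :=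
    Real.log_lt_log (by positivity) (by norm_num)
  rw [Real.log_pow, Real.log_pow] at key
  push_cast at key
  unfold hAux
  norm_num
  nlinarith [key]

lemma hAux_pos_37 : 0 < hAux 0.37 := by
  have key : Real.log ((0.63:ℝ) ^ 63) < Real.log ((0.37:ℝ) ^ 26) :=
    Real.log_lt_log (by positivity) (by norm_num)
  rw [Real.log_pow, Real.log_pow] at key
  push_cast at key
  unfold hAux
  norm_num
  nlinarith [key]

lemma root_lt_half {x : ℝ} (hx : x ∈ Set.Ioo (0:ℝ) 1) (hz : hAux x = 0) : x < 1/2 := by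
  by_contra hc
  push_neg at hc
  have := hAux_pos_of_half hc hx.2
  linarith

theorem ssle_grinding_threshold :
    (∃! α : ℝ, α ∈ Set.Ioo (0:ℝ) 1 ∧ ((1 - α) / α ^ 2) ^ (α - 1) = α) ∧
    (∀ α : ℝ, α ∈ Set.Ioo (0:ℝ) 1 → ((1 - α) / α ^ 2) ^ (α - 1) = α →
      0.35 < α ∧ α < 0.37) := by
  -- continuity of hAux on [0.35, 0.37]
  have hcont : ContinuousOn hAux (Set.Icc (0.35:ℝ) 0.37) := by
    intro x hx
    obtain ⟨h1, h2⟩ := hx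
    exact (hAux_hasDerivAt (by linarith) (by linarith)).continuousAt.continuousWithinAt
  have hex : ∃ α ∈ Set.Ioo (0.35:ℝ) 0.37, hAux α = 0 := by
    have h0 : (0:ℝ) ∈ Set.Ioo (hAux 0.35) (hAux 0.37) := ⟨hAux_neg_35, hAux_pos_37⟩
    have := intermediate_value_Ioo (by norm_num : (0.35:ℝ) ≤ 0.37) hcont h0
    obtain ⟨α, hα, hval⟩ := this
    exact ⟨α, hα, hval⟩
  obtain ⟨α₀, hα₀mem, hα₀zero⟩ := hex
  have hα₀Ioo : α₀ ∈ Set.Ioo (0:ℝ) 1 := ⟨by linarith [hα₀mem.1], by linarith [hα₀mem.2]⟩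
  -- bounds for any root
  have bounds : ∀ α : ℝ, α ∈ Set.Ioo (0:ℝ) 1 → ((1 - α) / α ^ 2) ^ (α - 1) = α →
      0.35 < α ∧ α < 0.37 := by
    intro α hmem heq
    have hz : hAux α = 0 := (eq_iff_hAux hmem.1 hmem.2).mp heq
    have hhalf : α < 1/2 := root_lt_half hmem hz
    have hmem' : α ∈ Set.Ioo (0:ℝ) (1/2) := ⟨hmem.1, hhalf⟩
    have h35 : (0.35:ℝ) ∈ Set.Ioo (0:ℝ) (1/2) := by norm_num
    have h37 : (0.37:ℝ) ∈ Set.Ioo (0:ℝ) (1/2) := by norm_num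
    constructor
    · by_contra hc
      push_neg at hc
      rcases eq_or_lt_of_le hc with h | h
      · rw [h] at hz; linarith [hAux_neg_35]
      · have := hAux_strictMonoOn hmem' h35 h
        linarith [hAux_neg_35]
    · by_contra hc
      push_neg at hc
      rcases eq_or_lt_of_le hc with h | h
      · rw [← h] at hz; linarith [hAux_pos_37]
      · have := hAux_strictMonoOn h37 hmem' h
        linarith [hAux_pos_37]
  constructor
  · refine ⟨α₀, ⟨hα₀Ioo, (eq_iff_hAux hα₀Ioo.1 hα₀Ioo.2).mpr hα₀zero⟩, ?_⟩
    rintro β ⟨hβmem, hβeq⟩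
    have hβz : hAux β = 0 := (eq_iff_hAux hβmem.1 hβmem.2).mp hβeq
    have hβhalf : β < 1/2 := root_lt_half hβmem hβz
    have hα₀half : α₀ < 1/2 := root_lt_half hα₀Ioo hα₀zero
    exact hAux_strictMonoOn.injOn ⟨hβmem.1, hβhalf⟩ ⟨hα₀Ioo.1, hα₀half⟩
      (by rw [hβz, hα₀zero])
  · exact bounds
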